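/- Let D ⊂ ℝ² be a bounded domain with boundary Γ, circumradius R (with circumscribed disk centered at the origin) and inradius ρ. Then Γ ⊂ B_R \ B_{2ρ−R}, i.e., every boundary point p satisfies 2ρ − R ≤ |p| ≤ R. -/
import Mathlib

open Set Metric Bornology

/-- The inradius of a planar set: the supremum of radii of open disks contained in it. -/
noncomputable def inradius (D : Set (EuclideanSpace ℝ (Fin 2))) : ℝ :=
  sSup {r : ℝ | 0 ≤ r ∧ ∃ c, ball c r ⊆ D}

lemma key {c : EuclideanSpace ℝ (Fin 2)} {r R : ℝ} (hr : 0 < r)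
    (h : ball c r ⊆ closedBall (0 : EuclideanSpace ℝ (Fin 2)) R) : ‖c‖ + r ≤ R := by
  have hcl : closedBall c r ⊆ closedBall (0 : EuclideanSpace ℝ (Fin 2)) R := by
    rw [← closure_ball c hr.ne']
    exact closure_minimal h Metric.isClosed_closedBall
  by_cases hc : c = 0
  · obtain ⟨u, hu⟩ : ∃ u : EuclideanSpace ℝ (Fin 2), ‖u‖ = 1 :=
      ⟨EuclideanSpace.single 0 1, by simp⟩
    have hx : c + r • u ∈ closedBall c r := by
      simp [mem_closedBall, dist_eq_norm, norm_smul, hu, abs_of_pos hr]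
    have h2 := hcl hx
    rw [mem_closedBall, dist_eq_norm, sub_zero, hc, zero_add, norm_smul,
      Real.norm_eq_abs, abs_of_pos hr, hu, mul_one] at h2
    simp [hc]
    linarith
  · have hnc : (0:ℝ) < ‖c‖ := norm_pos_iff.mpr hc
    have hx : c + (r / ‖c‖) • c ∈ closedBall c r := by
      have : ‖(r / ‖c‖) • c‖ = r := by
        rw [norm_smul, Real.norm_eq_abs, abs_of_pos (div_pos hr hnc),
          div_mul_cancel₀ _ hnc.ne']
      simp [mem_closedBall, dist_eq_norm, this]
    have hxx := hcl hx
    rw [mem_closedBall, dist_eq_norm, sub_zero] at hxx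
    have heq : c + (r / ‖c‖) • c = (1 + r / ‖c‖) • c := by module
    rw [heq, norm_smul, Real.norm_eq_abs, abs_of_pos (by positivity), add_mul,
      one_mul, div_mul_cancel₀ _ hnc.ne'] at hxx
    linarith

/-- If `D` is a bounded planar domain whose circumscribed disk has center the origin and
radius `R`, and `ρ` is the inradius of `D`, then the boundary `Γ = ∂D` is contained in
the annulus `B_R \ B_{2ρ - R}`: every `p ∈ ∂D` satisfies `2ρ - R ≤ |p| ≤ R`. -/
theorem boundary_in_annulus (D : Set (EuclideanSpace ℝ (Fin 2))) (R ρ : ℝ)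
    (hDo : IsOpen D) (hDc : IsConnected D) (hDb : IsBounded D)
    (hsub : D ⊆ closedBall 0 R)
    (hmin : ∀ (c : EuclideanSpace ℝ (Fin 2)) (r : ℝ), D ⊆ closedBall c r → R ≤ r)
    (hρ : ρ = inradius D) :
    ∀ p ∈ frontier D, 2 * ρ - R ≤ ‖p‖ ∧ ‖p‖ ≤ R := by
  intro p hp
  have hR0 : 0 ≤ R := by
    obtain ⟨x, hx⟩ := hDc.nonempty
    have := hsub hx
    rw [mem_closedBall, dist_eq_norm, sub_zero] at this
    exact le_trans (norm_nonneg x) this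
  have hub : ‖p‖ ≤ R := by
    have := (frontier_subset_closure.trans
      (closure_minimal hsub Metric.isClosed_closedBall)) hp
    rwa [mem_closedBall, dist_eq_norm, sub_zero] at this
  refine ⟨?_, hub⟩
  have hpD : p ∉ D := by
    rw [hDo.frontier_eq] at hp; exact hp.2
  have hle : ∀ r ∈ {r : ℝ | 0 ≤ r ∧ ∃ c, ball c r ⊆ D}, r ≤ (‖p‖ + R) / 2 := by
    rintro r ⟨hr0, c, hc⟩
    rcases eq_or_lt_of_le hr0 with h | h
    · have hpos : (0:ℝ) ≤ (‖p‖ + R)/2 := by positivity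
      linarith
    · have h1 : ‖c‖ + r ≤ R := key h (hc.trans hsub)
      have h2 : r ≤ dist p c := by
        by_contra hcon
        rw [not_le] at hcon
        exact hpD (hc (mem_ball.mpr hcon))
      have h3 : dist p c ≤ ‖p‖ + ‖c‖ := by
        rw [dist_eq_norm]; exact norm_sub_le p c
      linarith
  have hρle : ρ ≤ (‖p‖ + R) / 2 := by
    rw [hρ, inradius]
    exact Real.sSup_le hle (by positivity)
  linarith
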